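/- Uniqueness of supertransvectant coefficients: let N be a positive integer, s ∈ {1,−1}, and λ, μ real numbers such that 2λ + l ≠ 0 and 2μ + m ≠ 0 for all integers l, m with 0 ≤ l, m ≤ N. Suppose C : {(i,j) ∈ ℕ² : i+j = N} → ℝ satisfies, for all nonnegative integers l, m for which the indices involved lie in this set: (2λ+l)·C_{2l+1,2m} = −s·(2μ+m)·C_{2l,2m+1}; l·C_{2l,2m−1} = s·m·C_{2l−1,2m}; (2λ+l)·C_{2l+1,2m−1} = −s·m·C_{2l,2m}; l·C_{2l,2m} = s·(2μ+m)·C_{2l−1,2m+1}. If C_{0,N} = 0, then C vanishes identically. Consequently, any two solutions of this system with the same value at (0,N) coincide, so the solution space is at most one-dimensional. -/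
import Mathlib


/-- The linear system expressing osp(1|2)-equivariance of a bilinear differential operator
`Σ_{i+j=N} C_{i,j} D̄^i(f)·D̄^j(g) : F_λ ⊗ F_μ → F_{λ+μ+N/2}`; the coefficients `C` are
indexed by pairs `(i,j)` of nonnegative integers with `i+j = N`, and the equations are
imposed whenever all indices involved are legal (nonnegative and summing to `N`). -/
def TransvectantSystem (N : ℕ) (s lam mu : ℝ) (C : ℕ → ℕ → ℝ) : Prop :=
  (∀ l m : ℕ, (2 * l + 1) + 2 * m = N →
    (2 * lam + (l : ℝ)) * C (2 * l + 1) (2 * m)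
      = -s * (2 * mu + (m : ℝ)) * C (2 * l) (2 * m + 1)) ∧
  (∀ l m : ℕ, 1 ≤ l → 1 ≤ m → 2 * l + (2 * m - 1) = N →
    (l : ℝ) * C (2 * l) (2 * m - 1) = s * (m : ℝ) * C (2 * l - 1) (2 * m)) ∧
  (∀ l m : ℕ, 1 ≤ m → (2 * l + 1) + (2 * m - 1) = N →
    (2 * lam + (l : ℝ)) * C (2 * l + 1) (2 * m - 1) = -s * (m : ℝ) * C (2 * l) (2 * m)) ∧
  (∀ l m : ℕ, 1 ≤ l → 2 * l + 2 * m = N →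
    (l : ℝ) * C (2 * l) (2 * m) = s * (2 * mu + (m : ℝ)) * C (2 * l - 1) (2 * m + 1))

/-- uniqueness of supertransvectant coefficients.  If `λ`, `μ` avoid the
resonant set (`2λ+l ≠ 0`, `2μ+m ≠ 0` for `0 ≤ l,m ≤ N`) then a solution of the
equivariance system vanishing at `(0,N)` vanishes identically; consequently two solutions
agreeing at `(0,N)` coincide, so the solution space is at most one-dimensional. -/
theorem transvectant_coefficients_unique (N : ℕ) (hN : 1 ≤ N) (s lam mu : ℝ)
    (hs : s = 1 ∨ s = -1)
    (hlam : ∀ l : ℕ, l ≤ N → 2 * lam + (l : ℝ) ≠ 0)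
    (hmu : ∀ m : ℕ, m ≤ N → 2 * mu + (m : ℝ) ≠ 0)
    (C D : ℕ → ℕ → ℝ)
    (hC : TransvectantSystem N s lam mu C) (hD : TransvectantSystem N s lam mu D) :
    (C 0 N = 0 → ∀ i j : ℕ, i + j = N → C i j = 0) ∧
    (C 0 N = D 0 N → ∀ i j : ℕ, i + j = N → C i j = D i j) := by
  have vanish : ∀ E : ℕ → ℕ → ℝ, TransvectantSystem N s lam mu E → E 0 N = 0 →
      ∀ i j : ℕ, i + j = N → E i j = 0 := by
    intro E hE h0 i
    obtain ⟨h1, h2, h3, h4⟩ := hE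
    induction i with
    | zero =>
      intro j hj
      have : j = N := by omega
      rw [this]; exact h0
    | succ i ih =>
      intro j hij
      rcases Nat.even_or_odd i with ⟨l, hl⟩ | ⟨l, hl⟩
      · -- i + 1 = 2l + 1, odd
        have hi1 : i + 1 = 2 * l + 1 := by omega
        rcases Nat.even_or_odd j with ⟨m, hm⟩ | ⟨m, hm⟩
        · -- j = 2m
          have hj' : j = 2 * m := by omega
          have heq := h1 l m (by omega)
          have hz := ih (2 * m + 1) (by omega)
          rw [show i = 2 * l from by omega] at hz
          rw [hz, mul_zero] at heq
          rw [hi1, hj']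
          exact (mul_eq_zero.mp heq).resolve_left (hlam l (by omega))
        · -- j = 2m + 1 = 2(m+1) - 1
          have hj' : j = 2 * (m + 1) - 1 := by omega
          have heq := h3 l (m + 1) (by omega) (by omega)
          have hz := ih (2 * (m + 1)) (by omega)
          rw [show i = 2 * l from by omega] at hz
          rw [hz, mul_zero] at heq
          rw [hi1, hj']
          exact (mul_eq_zero.mp heq).resolve_left (hlam l (by omega))
      · -- i + 1 = 2(l+1), even
        have hi1 : i + 1 = 2 * (l + 1) := by omega
        rcases Nat.even_or_odd j with ⟨m, hm⟩ | ⟨m, hm⟩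
        · -- j = 2m
          have hj' : j = 2 * m := by omega
          have heq := h4 (l + 1) m (by omega) (by omega)
          have hz := ih (2 * m + 1) (by omega)
          rw [show i = 2 * (l + 1) - 1 from by omega] at hz
          rw [hz, mul_zero] at heq
          rw [hi1, hj']
          have hne : ((l : ℝ) + 1) ≠ 0 := by positivity
          have := (mul_eq_zero.mp heq).resolve_left (by push_cast; exact hne)
          exact this
        · -- j = 2m + 1 = 2(m+1) - 1
          have hj' : j = 2 * (m + 1) - 1 := by omega
          have heq := h2 (l + 1) (m + 1) (by omega) (by omega) (by omega)
          have hz := ih (2 * (m + 1)) (by omega)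
          rw [show i = 2 * (l + 1) - 1 from by omega] at hz
          rw [hz, mul_zero] at heq
          rw [hi1, hj']
          have hne : ((l : ℝ) + 1) ≠ 0 := by positivity
          exact (mul_eq_zero.mp heq).resolve_left (by push_cast; exact hne)
  constructor
  · exact vanish C hC
  · intro h0 i j hij
    obtain ⟨c1, c2, c3, c4⟩ := hC
    obtain ⟨d1, d2, d3, d4⟩ := hD
    have hE : TransvectantSystem N s lam mu (fun i j => C i j - D i j) := by
      refine ⟨fun l m h => ?_, fun l m hl hm h => ?_, fun l m hm h => ?_,
        fun l m hl h => ?_⟩ <;> simp only []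
      · linear_combination c1 l m h - d1 l m h
      · linear_combination c2 l m hl hm h - d2 l m hl hm h
      · linear_combination c3 l m hm h - d3 l m hm h
      · linear_combination c4 l m hl h - d4 l m hl h
    have := vanish _ hE (by simp [sub_eq_zero.mpr h0]) i j hij
    simpa [sub_eq_zero] using this
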